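/- Let T be the path with nodes V = {0, …, n} and edges {i, i+1} for 0 ≤ i ≤ n−1, where n ≥ 2. Then LMC(T) equals the set of all x ∈ R^{binom(V,2)} satisfying: x_{0n} ≤ 1; x_{in} ≤ x_{i−1,n} for 1 ≤ i ≤ n−1; x_{0i} ≤ x_{0,i+1} for 1 ≤ i ≤ n−1; x_{i−1,i+1} ≤ x_{i−1,i} + x_{i,i+1} for 1 ≤ i ≤ n−1; and x_{jk} + x_{j+1,k−1} ≤ x_{j+1,k} + x_{j,k−1} for all 0 ≤ j < k−2 ≤ n−2. -/

import Mathlib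

open Finset

open scoped Classical

variable {V : Type*}

/-- A decomposition of a graph `G`: a partition of the node set all of whose blocks
induce connected subgraphs. -/
def IsDecomposition (G : SimpleGraph V) (P : Set (Set V)) : Prop :=
  Setoid.IsPartition P ∧ ∀ U ∈ P, (G.induce U).Connected

/-- Two nodes lie in a common block of `P`. -/
def SameBlock (P : Set (Set V)) (u v : V) : Prop :=
  ∃ U ∈ P, u ∈ U ∧ v ∈ U

/-- The edge `e` straddles two distinct blocks of `P`. -/
def Crosses (P : Set (Set V)) (e : Sym2 V) : Prop :=
  ∃ u v, e = s(u, v) ∧ ¬ SameBlock P u v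

/-- The multicut of `G` induced by a decomposition `P`. -/
def inducedMulticut (G : SimpleGraph V) (P : Set (Set V)) : Set (Sym2 V) :=
  {e | e ∈ G.edgeSet ∧ Crosses P e}

/-- `M` is a multicut of `G`. -/
def IsMulticut (G : SimpleGraph V) (M : Set (Sym2 V)) : Prop :=
  ∃ P, IsDecomposition G P ∧ M = inducedMulticut G P

/-- The characteristic vector (in the ambient space `Sym2 V → ℝ`, with coordinates
outside the edge set of `H` pinned to `0`) of the multicut of `H` induced by `P`. -/
noncomputable def multicutVec (H : SimpleGraph V) (P : Set (Set V)) : Sym2 V → ℝ :=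
  fun e => if e ∈ H.edgeSet ∧ Crosses P e then 1 else 0

/-- Characteristic vectors of multicuts of `H` lifted from `G`. -/
def liftedVectors (G H : SimpleGraph V) : Set (Sym2 V → ℝ) :=
  {x | ∃ P, IsDecomposition G P ∧ x = multicutVec H P}

/-- The lifted multicut polytope with respect to `G` and `H`. -/
def LMC (G H : SimpleGraph V) : Set (Sym2 V → ℝ) :=
  convexHull ℝ (liftedVectors G H)

/-- The inequality `f x ≤ b` is valid for `P` and its equality set has affine dimension
`|E ∪ F| - 1`, i.e. one less than the dimension of the corresponding lifted multicut
polytope for the augmented graph `H`. -/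
def DefinesFacet (H : SimpleGraph V) (P : Set (Sym2 V → ℝ))
    (f : (Sym2 V → ℝ) → ℝ) (b : ℝ) : Prop :=
  (∀ x ∈ P, f x ≤ b) ∧
  Module.finrank ℝ (affineSpan ℝ {x | x ∈ P ∧ f x = b}).direction + 1 = Nat.card H.edgeSet

open Fin.NatCast

namespace LMCP

/-! ### ranks and vertex vectors -/

noncomputable def rk (S : Finset ℕ) (t : ℕ) : ℕ := (S.filter (· ≤ t)).card

lemma rk_mono (S : Finset ℕ) {u v : ℕ} (h : u ≤ v) : rk S u ≤ rk S v := by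
  apply Finset.card_le_card
  intro s hs
  simp only [Finset.mem_filter] at hs ⊢
  exact ⟨hs.1, hs.2.trans h⟩

lemma rk_add (S : Finset ℕ) {u v : ℕ} (h : u ≤ v) :
    rk S v = rk S u + (S ∩ Finset.Ioc u v).card := by
  unfold rk
  rw [← Finset.card_filter_add_card_filter_not (p := fun s => s ≤ u)
    (s := S.filter (· ≤ v))]
  congr 1
  · rw [Finset.filter_filter]
    congr 1
    apply Finset.filter_congr
    intro s _
    constructor
    · rintro ⟨_, h2⟩; exact h2
    · intro h2; exact ⟨le_trans h2 h, h2⟩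
  · rw [Finset.filter_filter]
    congr 1
    ext s
    simp only [Finset.mem_filter, Finset.mem_inter, Finset.mem_Ioc]
    constructor
    · rintro ⟨h1, h2⟩; exact ⟨h1, by omega⟩
    · rintro ⟨h1, h2⟩; exact ⟨h1, by omega⟩

lemma rk_eq_iff (S : Finset ℕ) {u v : ℕ} (h : u ≤ v) :
    rk S u = rk S v ↔ S ∩ Finset.Ioc u v = ∅ := by
  rw [rk_add S h]
  constructor
  · intro he
    have : (S ∩ Finset.Ioc u v).card = 0 := by omega
    exact Finset.card_eq_zero.mp this
  · intro he; rw [he]; simp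

end LMCP

namespace LMCP

variable {n : ℕ}

/-! ### vertex vectors and partitions from breakpoint sets -/

noncomputable def vecS (n : ℕ) (S : Finset ℕ) : Sym2 (Fin (n+1)) → ℝ :=
  Sym2.lift ⟨fun a b => if rk S a.val = rk S b.val then 0 else 1, by
    intro a b
    simp only
    by_cases h : rk S a.val = rk S b.val
    · simp [h]
    · rw [if_neg h, if_neg (fun hh => h hh.symm)]⟩

lemma vecS_apply (S : Finset ℕ) (a b : Fin (n+1)) :
    vecS n S s(a, b) = if rk S a.val = rk S b.val then 0 else 1 := rfl

noncomputable def partS (n : ℕ) (S : Finset ℕ) : Set (Set (Fin (n+1))) :=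
  (Setoid.ker (fun v : Fin (n+1) => rk S v.val)).classes

lemma sameBlock_partS (S : Finset ℕ) (a b : Fin (n+1)) :
    SameBlock (partS n S) a b ↔ rk S a.val = rk S b.val := by
  constructor
  · rintro ⟨U, ⟨y, rfl⟩, ha, hb⟩
    exact ha.trans hb.symm
  · intro h
    refine ⟨{x | Setoid.ker (fun v : Fin (n+1) => rk S v.val) x a}, Setoid.mem_classes _ a,
      ?_, ?_⟩
    · exact rfl
    · exact h.symm

lemma isPartition_partS (S : Finset ℕ) : Setoid.IsPartition (partS n S) :=
  Setoid.isPartition_classes _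

/-! ### connectivity in the path graph -/

lemma pathGraph_walk_support {A : Set (Fin (n+1))} {a b : A}
    (p : ((SimpleGraph.pathGraph (n+1)).induce A).Walk a b) (w : ℕ)
    (hw : ((a : Fin (n+1)).val ≤ w ∧ w ≤ (b : Fin (n+1)).val) ∨
      ((b : Fin (n+1)).val ≤ w ∧ w ≤ (a : Fin (n+1)).val)) :
    ∃ c ∈ p.support, (c : Fin (n+1)).val = w := by
  induction p with
  | nil =>
    rename_i u
    exact ⟨u, by simp, by omega⟩
  | @cons a a' b h p ih =>
    by_cases hwa : (a : Fin (n+1)).val = w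
    · exact ⟨a, by simp, hwa⟩
    · have h' : (SimpleGraph.pathGraph (n+1)).Adj (a : Fin (n+1)) (a' : Fin (n+1)) := h
      have hadj : (a : Fin (n+1)).val + 1 = (a' : Fin (n+1)).val ∨
          (a' : Fin (n+1)).val + 1 = (a : Fin (n+1)).val :=
        SimpleGraph.pathGraph_adj.mp h' 
      obtain ⟨c, hc, hcv⟩ := ih (by omega)
      exact ⟨c, by simp [hc], hcv⟩

lemma pathGraph_reachable {A : Set (Fin (n+1))}
    (hA : ∀ ⦃a b c : Fin (n+1)⦄, a ∈ A → c ∈ A → a.val ≤ b.val → b.val ≤ c.val → b ∈ A)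
    {u v : Fin (n+1)} (hu : u ∈ A) (hv : v ∈ A) :
    ((SimpleGraph.pathGraph (n+1)).induce A).Reachable ⟨u, hu⟩ ⟨v, hv⟩ := by
  -- reduce to u ≤ v by symmetry
  wlog h : u.val ≤ v.val generalizing u v
  · exact (this hv hu (by omega)).symm
  -- induction on v - u
  obtain ⟨d, hd⟩ : ∃ d, v.val = u.val + d := ⟨v.val - u.val, by omega⟩
  clear h
  induction d generalizing u with
  | zero =>
    have : u = v := Fin.ext (by omega)
    subst this
    rfl
  | succ d ih =>
    have hun : u.val + 1 ≤ n := by omega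
    have hu1 : (⟨u.val + 1, by omega⟩ : Fin (n+1)) ∈ A := by
      apply hA hu hv <;> simp <;> omega
    have hadj : ((SimpleGraph.pathGraph (n+1)).induce A).Adj ⟨u, hu⟩ ⟨⟨u.val+1, by omega⟩, hu1⟩ := by
      show (SimpleGraph.pathGraph (n+1)).Adj u ⟨u.val+1, by omega⟩
      exact SimpleGraph.pathGraph_adj.mpr (Or.inl rfl)
    exact (hadj.reachable).trans (ih hu1 (by simp; omega))

lemma interval_fiber (S : Finset ℕ) (y : Fin (n+1)) :
    ∀ ⦃a b c : Fin (n+1)⦄, a ∈ {x : Fin (n+1) | rk S x.val = rk S y.val} →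
      c ∈ {x : Fin (n+1) | rk S x.val = rk S y.val} → a.val ≤ b.val → b.val ≤ c.val →
      b ∈ {x : Fin (n+1) | rk S x.val = rk S y.val} := by
  intro a b c ha hc hab hbc
  simp only [Set.mem_setOf_eq] at *
  have h1 := rk_mono S hab
  have h2 := rk_mono S hbc
  omega

lemma isDecomposition_partS (S : Finset ℕ) :
    IsDecomposition (SimpleGraph.pathGraph (n+1)) (partS n S) := by
  refine ⟨isPartition_partS S, ?_⟩
  rintro U ⟨y, rfl⟩
  rw [SimpleGraph.connected_iff]
  refine ⟨?_, ⟨⟨y, rfl⟩⟩⟩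
  intro a b
  exact pathGraph_reachable (interval_fiber S y) a.2 b.2

lemma sameBlock_refl {P : Set (Set V)} (hP : Setoid.IsPartition P) (u : V) :
    SameBlock P u u := by
  obtain ⟨B, ⟨hB, huB⟩, -⟩ := hP.2 u
  exact ⟨B, hB, huB, huB⟩

lemma sameBlock_symm {P : Set (Set V)} {u v : V} (h : SameBlock P u v) : SameBlock P v u := by
  obtain ⟨B, hB, h1, h2⟩ := h
  exact ⟨B, hB, h2, h1⟩

lemma sameBlock_trans {P : Set (Set V)} (hP : Setoid.IsPartition P) {u v w : V}
    (h1 : SameBlock P u v) (h2 : SameBlock P v w) : SameBlock P u w := by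
  obtain ⟨B, hB, hu, hv⟩ := h1
  obtain ⟨B', hB', hv', hw⟩ := h2
  obtain ⟨C, ⟨⟨hC, hvC⟩, hCuniq⟩⟩ := hP.2 v
  have e1 : B = C := hCuniq B ⟨hB, hv⟩
  have e2 : B' = C := hCuniq B' ⟨hB', hv'⟩
  exact ⟨C, hC, e1 ▸ hu, e2 ▸ hw⟩

lemma crosses_iff {P : Set (Set V)} (u v : V) :
    Crosses P s(u, v) ↔ ¬ SameBlock P u v := by
  constructor
  · rintro ⟨a, b, heq, hnot⟩ hsame
    rw [Sym2.eq_iff] at heq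
    rcases heq with ⟨rfl, rfl⟩ | ⟨rfl, rfl⟩
    · exact hnot hsame
    · exact hnot (sameBlock_symm hsame)
  · intro h
    exact ⟨u, v, rfl, h⟩

lemma multicutVec_top_apply (P : Set (Set (Fin (n+1)))) (hP : Setoid.IsPartition P)
    (a b : Fin (n+1)) :
    multicutVec ⊤ P s(a, b) = if SameBlock P a b then 0 else 1 := by
  unfold multicutVec
  by_cases h : SameBlock P a b
  · rw [if_neg, if_pos h]
    rintro ⟨-, hc⟩
    exact (crosses_iff a b).mp hc h
  · have hab : a ≠ b := by
      rintro rfl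
      exact h (sameBlock_refl hP a)
    rw [if_pos, if_neg h]
    refine ⟨?_, (crosses_iff a b).mpr h⟩
    rw [SimpleGraph.mem_edgeSet]
    exact hab

lemma multicutVec_partS (S : Finset ℕ) : multicutVec ⊤ (partS n S) = vecS n S := by
  funext e
  induction e with
  | _ a b =>
    rw [multicutVec_top_apply _ (isPartition_partS S), vecS_apply]
    by_cases h : rk S a.val = rk S b.val
    · rw [if_pos ((sameBlock_partS S a b).mpr h), if_pos h]
    · rw [if_neg (fun hs => h ((sameBlock_partS S a b).mp hs)), if_neg h]

end LMCP

namespace LMCP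

variable {n : ℕ}

/-! ### every decomposition of the path comes from breakpoints -/

lemma block_interval {P : Set (Set (Fin (n+1)))}
    (hP : IsDecomposition (SimpleGraph.pathGraph (n+1)) P) {U : Set (Fin (n+1))} (hU : U ∈ P)
    {u v w : Fin (n+1)} (hu : u ∈ U) (hv : v ∈ U) (h1 : u.val ≤ w.val) (h2 : w.val ≤ v.val) :
    w ∈ U := by
  obtain ⟨hwalk⟩ := (hP.2 U hU).preconnected ⟨u, hu⟩ ⟨v, hv⟩
  obtain ⟨c, _, hcv⟩ := pathGraph_walk_support hwalk w.val (Or.inl ⟨h1, h2⟩)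
  have : (c : Fin (n+1)) = w := Fin.ext hcv
  exact this ▸ c.2

noncomputable def brk (n : ℕ) (P : Set (Set (Fin (n+1)))) : Finset ℕ :=
  (Finset.Icc 1 n).filter
    (fun i => ¬ SameBlock P (((i-1 : ℕ) : Fin (n+1))) ((i : Fin (n+1))))

lemma val_natCast {i : ℕ} (h : i ≤ n) : ((i : Fin (n+1))).val = i :=
  Fin.val_cast_of_lt (by omega)

lemma sameBlock_iff_inter {P : Set (Set (Fin (n+1)))}
    (hP : IsDecomposition (SimpleGraph.pathGraph (n+1)) P) :
    ∀ d u v : ℕ, u ≤ v → v ≤ n → v = u + d →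
      (SameBlock P ((u : Fin (n+1))) ((v : Fin (n+1))) ↔ brk n P ∩ Finset.Ioc u v = ∅) := by
  intro d
  induction d with
  | zero =>
    intro u v huv hvn hd
    subst hd
    simp only [Nat.add_zero, Finset.Ioc_self, Finset.inter_empty, iff_true]
    exact sameBlock_refl hP.1 _
  | succ d ih =>
    intro u v huv hvn hd
    have hvpos : 1 ≤ v := by omega
    have hv1 : v - 1 ≤ n := by omega
    have huv1 : u ≤ v - 1 := by omega
    constructor
    · intro hs
      -- the common block is an interval containing [u, v]
      obtain ⟨B, hB, huB, hvB⟩ := hs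
      rw [Finset.eq_empty_iff_forall_notMem]
      intro i hi
      simp only [Finset.mem_inter, Finset.mem_Ioc, brk, Finset.mem_filter, Finset.mem_Icc] at hi
      obtain ⟨⟨⟨hi1, hin⟩, hnot⟩, hui, hiv⟩ := hi
      apply hnot
      have hiB : ((i : Fin (n+1))) ∈ B :=
        block_interval hP hB huB hvB (by rw [val_natCast (le_trans huv hvn), val_natCast hin]; omega)
          (by rw [val_natCast hin, val_natCast hvn]; omega)
      have hi1B : (((i-1 : ℕ) : Fin (n+1))) ∈ B :=
        block_interval hP hB huB hvB
          (by rw [val_natCast (le_trans huv hvn), val_natCast (by omega : i - 1 ≤ n)]; omega)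
          (by rw [val_natCast (by omega : i - 1 ≤ n), val_natCast hvn]; omega)
      exact ⟨B, hB, hi1B, hiB⟩
    · intro hempty
      have hsub : brk n P ∩ Finset.Ioc u (v-1) = ∅ := by
        rw [Finset.eq_empty_iff_forall_notMem] at hempty ⊢
        intro i hi
        apply hempty i
        simp only [Finset.mem_inter, Finset.mem_Ioc] at hi ⊢
        exact ⟨hi.1, hi.2.1, by omega⟩
      have h1 : SameBlock P ((u : Fin (n+1))) (((v-1 : ℕ) : Fin (n+1))) :=
        (ih u (v-1) huv1 hv1 (by omega)).mpr hsub
      have hvnotin : v ∉ brk n P := by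
        intro hvmem
        have : v ∈ brk n P ∩ Finset.Ioc u v :=
          Finset.mem_inter.mpr ⟨hvmem, Finset.mem_Ioc.mpr ⟨by omega, le_refl v⟩⟩
        rw [hempty] at this
        exact absurd this (Finset.notMem_empty v)
      have h2 : SameBlock P (((v-1 : ℕ) : Fin (n+1))) ((v : Fin (n+1))) := by
        by_contra hc
        exact hvnotin (Finset.mem_filter.mpr ⟨Finset.mem_Icc.mpr ⟨hvpos, hvn⟩, hc⟩)
      exact sameBlock_trans hP.1 h1 h2

lemma sameBlock_iff_rk {P : Set (Set (Fin (n+1)))}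
    (hP : IsDecomposition (SimpleGraph.pathGraph (n+1)) P) (a b : Fin (n+1)) :
    SameBlock P a b ↔ rk (brk n P) a.val = rk (brk n P) b.val := by
  wlog h : a.val ≤ b.val generalizing a b
  · rw [eq_comm, ← this b a (by omega)]
    exact ⟨sameBlock_symm, sameBlock_symm⟩
  rw [rk_eq_iff _ h]
  have ha : ((a.val : Fin (n+1))) = a := Fin.cast_val_eq_self a
  have hb : ((b.val : Fin (n+1))) = b := Fin.cast_val_eq_self b
  have hiff := sameBlock_iff_inter hP (b.val - a.val) a.val b.val h (by omega) (by omega)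
  rw [ha, hb] at hiff
  exact hiff

lemma multicutVec_eq_vecS {P : Set (Set (Fin (n+1)))}
    (hP : IsDecomposition (SimpleGraph.pathGraph (n+1)) P) :
    multicutVec ⊤ P = vecS n (brk n P) := by
  funext e
  induction e with
  | _ a b =>
    rw [multicutVec_top_apply _ hP.1, vecS_apply]
    by_cases h : SameBlock P a b
    · rw [if_pos h, if_pos ((sameBlock_iff_rk hP a b).mp h)]
    · rw [if_neg h, if_neg (fun hr => h ((sameBlock_iff_rk hP a b).mpr hr))]

end LMCP

namespace LMCP

/-! ### the inequality description -/

def RHSset (n : ℕ) : Set (Sym2 (Fin (n + 1)) → ℝ) :=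
  {x : Sym2 (Fin (n + 1)) → ℝ |
    (∀ e : Sym2 (Fin (n + 1)), e.IsDiag → x e = 0) ∧
    x s((0 : Fin (n + 1)), (n : Fin (n + 1))) ≤ 1 ∧
    (∀ i : ℕ, 1 ≤ i → i ≤ n - 1 →
      x s((i : Fin (n + 1)), (n : Fin (n + 1)))
        ≤ x s(((i - 1 : ℕ) : Fin (n + 1)), (n : Fin (n + 1)))) ∧
    (∀ i : ℕ, 1 ≤ i → i ≤ n - 1 →
      x s((0 : Fin (n + 1)), (i : Fin (n + 1)))
        ≤ x s((0 : Fin (n + 1)), ((i + 1 : ℕ) : Fin (n + 1)))) ∧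
    (∀ i : ℕ, 1 ≤ i → i ≤ n - 1 →
      x s(((i - 1 : ℕ) : Fin (n + 1)), ((i + 1 : ℕ) : Fin (n + 1)))
        ≤ x s(((i - 1 : ℕ) : Fin (n + 1)), (i : Fin (n + 1)))
          + x s((i : Fin (n + 1)), ((i + 1 : ℕ) : Fin (n + 1)))) ∧
    (∀ j k : ℕ, j + 2 < k → k ≤ n →
      x s((j : Fin (n + 1)), (k : Fin (n + 1)))
          + x s(((j + 1 : ℕ) : Fin (n + 1)), ((k - 1 : ℕ) : Fin (n + 1)))
        ≤ x s(((j + 1 : ℕ) : Fin (n + 1)), (k : Fin (n + 1)))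
          + x s((j : Fin (n + 1)), ((k - 1 : ℕ) : Fin (n + 1))))}

variable {n : ℕ}

lemma vecS_apply' (S : Finset ℕ) {i j : ℕ} (hi : i ≤ n) (hj : j ≤ n) :
    vecS n S s((i : Fin (n+1)), (j : Fin (n+1))) = if rk S i = rk S j then 0 else 1 := by
  rw [vecS_apply, val_natCast hi, val_natCast hj]

lemma vecS_mem_RHS (hn : 2 ≤ n) (S : Finset ℕ) : vecS n S ∈ RHSset n := by
  have h0n : (0:ℕ) ≤ n := Nat.zero_le n
  refine ⟨?_, ?_, ?_, ?_, ?_, ?_⟩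
  · intro e he
    induction e with
    | _ a b =>
      rw [Sym2.isDiag_iff_proj_eq] at he
      have hab : a = b := he
      rw [vecS_apply, hab, if_pos rfl]
  · rw [show s((0 : Fin (n + 1)), (n : Fin (n + 1))) = s(((0:ℕ) : Fin (n+1)), (n : Fin (n+1)))
      by norm_num]
    rw [vecS_apply' S h0n (le_refl n)]
    split_ifs <;> norm_num
  · intro i h1 h2
    rw [vecS_apply' S (by omega) (le_refl n), vecS_apply' S (by omega) (le_refl n)]
    have m1 := rk_mono S (show i - 1 ≤ i by omega)
    have m2 := rk_mono S (show i ≤ n by omega)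
    split_ifs <;> norm_num <;> omega
  · intro i h1 h2
    rw [show s((0 : Fin (n + 1)), (i : Fin (n+1))) = s(((0:ℕ) : Fin (n+1)), (i : Fin (n+1)))
      by norm_num,
      show s((0 : Fin (n + 1)), ((i+1 : ℕ) : Fin (n+1)))
        = s(((0:ℕ) : Fin (n+1)), ((i+1:ℕ) : Fin (n+1))) by norm_num]
    rw [vecS_apply' S h0n (by omega), vecS_apply' S h0n (by omega)]
    have m1 := rk_mono S (show (0:ℕ) ≤ i by omega)
    have m2 := rk_mono S (show i ≤ i + 1 by omega)
    split_ifs <;> norm_num <;> omega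
  · intro i h1 h2
    rw [vecS_apply' S (by omega) (by omega), vecS_apply' S (by omega) (by omega),
      vecS_apply' S (by omega) (by omega)]
    have m1 := rk_mono S (show i - 1 ≤ i by omega)
    have m2 := rk_mono S (show i ≤ i + 1 by omega)
    split_ifs <;> norm_num <;> omega
  · intro j k h1 h2
    rw [vecS_apply' S (by omega) (by omega), vecS_apply' S (by omega) (by omega),
      vecS_apply' S (by omega) (by omega), vecS_apply' S (by omega) (by omega)]
    have m1 := rk_mono S (show j ≤ j + 1 by omega)
    have m2 := rk_mono S (show j + 1 ≤ k - 1 by omega)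
    have m3 := rk_mono S (show k - 1 ≤ k by omega)
    split_ifs <;> norm_num <;> omega

lemma convex_RHS : Convex ℝ (RHSset n) := by
  rintro x hx y hy a b ha hb hab
  obtain ⟨hx0, hx1, hx2, hx3, hx4, hx5⟩ := hx
  obtain ⟨hy0, hy1, hy2, hy3, hy4, hy5⟩ := hy
  have key : ∀ e, (a • x + b • y) e = a * x e + b * y e := fun e => rfl
  refine ⟨?_, ?_, ?_, ?_, ?_, ?_⟩
  · intro e he; rw [key, hx0 e he, hy0 e he]; ring
  · rw [key]; nlinarith [hx1, hy1]
  · intro i h1 h2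
    rw [key, key]
    have := hx2 i h1 h2; have := hy2 i h1 h2
    nlinarith
  · intro i h1 h2
    rw [key, key]
    have := hx3 i h1 h2; have := hy3 i h1 h2
    nlinarith
  · intro i h1 h2
    rw [key, key, key]
    have := hx4 i h1 h2; have := hy4 i h1 h2
    nlinarith
  · intro j k h1 h2
    rw [key, key, key, key]
    have := hx5 j k h1 h2; have := hy5 j k h1 h2
    nlinarith

lemma lifted_subset_RHS (hn : 2 ≤ n) :
    liftedVectors (SimpleGraph.pathGraph (n+1)) (⊤ : SimpleGraph (Fin (n+1))) ⊆ RHSset n := by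
  rintro x ⟨P, hP, rfl⟩
  rw [multicutVec_eq_vecS hP]
  exact vecS_mem_RHS hn _

lemma LMC_subset_RHS (hn : 2 ≤ n) :
    LMC (SimpleGraph.pathGraph (n+1)) (⊤ : SimpleGraph (Fin (n+1))) ⊆ RHSset n :=
  convexHull_min (lifted_subset_RHS hn) convex_RHS

end LMCP

namespace LMCP

/-! ### the block-weight machinery for the hard direction -/

structure Hyp (n : ℕ) (X : ℕ → ℕ → ℝ) : Prop where
  hn : 2 ≤ n
  diag : ∀ u, u ≤ n → X u u = 0
  le1 : X 0 n ≤ 1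
  mn : ∀ i, 1 ≤ i → i ≤ n - 1 → X i n ≤ X (i-1) n
  zr : ∀ i, 1 ≤ i → i ≤ n - 1 → X 0 i ≤ X 0 (i+1)
  tri : ∀ i, 1 ≤ i → i ≤ n - 1 → X (i-1) (i+1) ≤ X (i-1) i + X i (i+1)
  sq : ∀ j k, j + 2 < k → k ≤ n → X j k + X (j+1) (k-1) ≤ X (j+1) k + X j (k-1)

noncomputable def Yb (n : ℕ) (X : ℕ → ℕ → ℝ) (a b : ℕ) : ℝ :=
  if a ≤ b ∧ b ≤ n then 1 - X a b else 0

noncomputable def Wgt (n : ℕ) (X : ℕ → ℕ → ℝ) (a b : ℕ) : ℝ :=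
  (Yb n X a b - Yb n X a (b+1)) -
    (if a = 0 then 0 else Yb n X (a-1) b - Yb n X (a-1) (b+1))

noncomputable def gm (X : ℕ → ℕ → ℝ) (a : ℕ) : ℝ := if a = 0 then 1 else X (a-1) a

noncomputable def qr (n : ℕ) (X : ℕ → ℕ → ℝ) (a b : ℕ) : ℝ :=
  if gm X a = 0 then (if b = n then 1 else 0) else Wgt n X a b / gm X a

variable {n : ℕ} {X : ℕ → ℕ → ℝ}

lemma Yb_self (h : Hyp n X) {a : ℕ} (ha : a ≤ n) : Yb n X a a = 1 := by
  rw [Yb, if_pos ⟨le_refl a, ha⟩, h.diag a ha, sub_zero]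

lemma Yb_of_le (h : Hyp n X) {a b : ℕ} (hab : a ≤ b) (hb : b ≤ n) : Yb n X a b = 1 - X a b :=
  if_pos ⟨hab, hb⟩

lemma Yb_out {a b : ℕ} (hb : n < b) : Yb n X a b = 0 := by
  rw [Yb, if_neg]; intro hb'; omega

/-- telescoping sum over `Icc a m`. -/
lemma sum_Icc_telescope (f : ℕ → ℝ) {a m : ℕ} (h : a ≤ m) :
    ∑ b ∈ Finset.Icc a m, (f b - f (b+1)) = f a - f (m+1) := by
  induction m with
  | zero =>
    have : a = 0 := by omega
    subst this
    simp
  | succ m ih =>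
    rcases Nat.lt_or_ge a (m+1) with hlt | hge
    · rw [← Finset.Ico_add_one_right_eq_Icc, Finset.sum_Ico_succ_top (by omega), Finset.Ico_add_one_right_eq_Icc,
        ih (by omega)]
      ring
    · have : a = m + 1 := by omega
      subst this
      simp

/-- telescoping sum over `range m` with a shifted predecessor term. -/
lemma sum_range_shift_telescope (H : ℕ → ℝ) {m : ℕ} (h : 1 ≤ m) :
    ∑ c ∈ Finset.range m, (H c - if c = 0 then 0 else H (c-1)) = H (m-1) := by
  induction m with
  | zero => omega
  | succ m ih =>
    rw [Finset.sum_range_succ]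
    rcases Nat.eq_zero_or_pos m with rfl | hm
    · simp
    · rw [ih (by omega), if_neg (show ¬ m = 0 by omega)]
      simp only [Nat.add_sub_cancel]
      ring

lemma sum_Wgt (h : Hyp n X) {a : ℕ} (ha : a ≤ n) :
    ∑ b ∈ Finset.Icc a n, Wgt n X a b = gm X a := by
  have : ∀ b, Wgt n X a b =
      (fun t => Yb n X a t - if a = 0 then 0 else Yb n X (a-1) t) b -
      (fun t => Yb n X a t - if a = 0 then 0 else Yb n X (a-1) t) (b+1) := by
    intro b
    simp only [Wgt]
    split_ifs <;> ring
  rw [Finset.sum_congr rfl (fun b _ => this b), sum_Icc_telescope _ ha]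
  simp only [Yb_out (show n < n + 1 by omega), Yb_self h ha]
  rcases Nat.eq_zero_or_pos a with rfl | hapos
  · simp [gm]
  · simp only [if_neg (show ¬ a = 0 by omega), Yb_of_le h (show a - 1 ≤ a by omega) ha, gm]
    ring

lemma sum_Wgt_conserve (h : Hyp n X) {a : ℕ} (h1 : 1 ≤ a) (h2 : a ≤ n) :
    ∑ c ∈ Finset.range a, Wgt n X c (a-1) = gm X a := by
  have key : ∀ c, Wgt n X c (a-1) =
      (fun t => Yb n X t (a-1) - Yb n X t (a-1+1)) c -
      (if c = 0 then 0 else (fun t => Yb n X t (a-1) - Yb n X t (a-1+1)) (c-1)) := by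
    intro c
    simp only [Wgt]
  rw [Finset.sum_congr rfl (fun c _ => key c), sum_range_shift_telescope _ h1]
  have ha1 : a - 1 + 1 = a := by omega
  rw [ha1, Yb_self h (by omega), Yb_of_le h (by omega) h2, gm, if_neg (by omega)]
  ring

end LMCP

namespace LMCP

variable {n : ℕ} {X : ℕ → ℕ → ℝ}

lemma chainA (h : Hyp n X) : ∀ k, 1 ≤ k → k ≤ n → X 0 k - X 0 1 ≤ X 1 k := by
  intro k
  induction k with
  | zero => omega
  | succ k ih =>
    intro _ hk1
    rcases Nat.eq_zero_or_pos k with rfl | hk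
    · rw [h.diag 1 (by omega)]
      simp
    · have step : X 0 (k+1) - X 0 k ≤ X 1 (k+1) - X 1 k := by
        rcases Nat.lt_or_ge k 2 with h2 | h2
        · have hk1' : k = 1 := by omega
          subst hk1'
          have := h.tri 1 (by omega) (by omega)
          simp only [show (1:ℕ) - 1 = 0 from rfl] at this
          rw [h.diag 1 (by omega)]
          linarith
        · have := h.sq 0 (k+1) (by omega) (by omega)
          simp only [Nat.add_sub_cancel] at this
          linarith
      have := ih hk (by omega)
      linarith

lemma X01_nonneg (h : Hyp n X) : 0 ≤ X 0 1 := by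
  have hn := h.hn
  have h1 := chainA h n (by omega) (le_refl n)
  have h2 := h.mn 1 (le_refl 1) (by omega)
  simp only [show (1:ℕ) - 1 = 0 from rfl] at h2
  linarith

lemma chainB (h : Hyp n X) : ∀ d j, j + d = n - 1 → X j n ≤ X j (n-1) + X (n-1) n := by
  intro d
  induction d with
  | zero =>
    intro j hj
    have : j = n - 1 := by omega
    subst this
    rw [h.diag (n-1) (by omega)]
    simp
  | succ d ih =>
    intro j hj
    rcases Nat.lt_or_ge (j + 2) n with hlt | hge
    · have hsq := h.sq j n (by omega) (le_refl n)
      have hih := ih (j+1) (by omega)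
      linarith
    · have hj2 : j + 2 = n := by omega
      have := h.tri (n-1) (by omega) (by omega)
      have e1 : n - 1 - 1 = j := by omega
      have e2 : n - 1 + 1 = n := by omega
      rw [e1, e2] at this
      linarith

lemma Xn1_nonneg (h : Hyp n X) : 0 ≤ X (n-1) n := by
  have hn := h.hn
  have h1 := chainB h (n-1) 0 (by omega)
  have h2 := h.zr (n-1) (by omega) (le_refl (n-1))
  have e : n - 1 + 1 = n := by omega
  rw [e] at h2
  linarith

lemma Wgt_nonneg (h : Hyp n X) {a b : ℕ} (hab : a ≤ b) (hb : b ≤ n) : 0 ≤ Wgt n X a b := by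
  have hn := h.hn
  unfold Wgt
  rcases Nat.eq_zero_or_pos a with rfl | ha
  · rw [if_pos rfl, sub_zero]
    rcases Nat.lt_or_ge b n with hbn | hbn
    · rw [Yb_of_le h (by omega) hb, Yb_of_le h (by omega) (by omega)]
      rcases Nat.eq_zero_or_pos b with rfl | hb0
      · rw [h.diag 0 (by omega)]
        have := X01_nonneg h
        norm_num
        linarith
      · have := h.zr b hb0 (by omega)
        linarith
    · have hbn' : b = n := by omega
      subst hbn'
      rw [Yb_of_le h (by omega) hb, Yb_out (by omega)]
      have := h.le1
      linarith
  · rw [if_neg (by omega)]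
    rcases Nat.lt_or_ge b n with hbn | hbn
    · -- b < n
      rw [Yb_of_le h hab hb, Yb_of_le h (by omega) (by omega),
        Yb_of_le h (by omega) hb, Yb_of_le h (by omega) (by omega)]
      rcases Nat.lt_or_ge a b with hab' | hab'
      · -- a < b : square inequality with j = a-1, k = b+1
        have := h.sq (a-1) (b+1) (by omega) (by omega)
        have e1 : a - 1 + 1 = a := by omega
        have e2 : b + 1 - 1 = b := by omega
        rw [e1, e2] at this
        linarith
      · -- a = b : triangle at i = a
        have hab2 : a = b := by omega
        subst hab2
        have := h.tri a (by omega) (by omega)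
        rw [h.diag a (by omega)]
        linarith
    · -- b = n
      have hbn' : b = n := by omega
      rw [Yb_out (show n < b + 1 by omega), Yb_out (show n < b + 1 by omega),
        Yb_of_le h hab hb, Yb_of_le h (by omega) hb, hbn']
      rcases Nat.lt_or_ge a n with han | han
      · have := h.mn a (by omega) (by omega)
        linarith
      · rw [show a = n by omega, h.diag n (le_refl n)]
        have := Xn1_nonneg h
        linarith

lemma gm_nonneg (h : Hyp n X) {a : ℕ} (ha : a ≤ n) : 0 ≤ gm X a := by
  rw [← sum_Wgt h ha]
  exact Finset.sum_nonneg fun b hbmem => by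
    simp only [Finset.mem_Icc] at hbmem
    exact Wgt_nonneg h hbmem.1 hbmem.2

lemma Wgt_eq_zero_of_gm (h : Hyp n X) {a : ℕ} (ha : a ≤ n) (hg : gm X a = 0)
    {b : ℕ} (hab : a ≤ b) (hb : b ≤ n) : Wgt n X a b = 0 := by
  have hsum : ∑ b ∈ Finset.Icc a n, Wgt n X a b = 0 := by rw [sum_Wgt h ha, hg]
  have := (Finset.sum_eq_zero_iff_of_nonneg (fun c hc => by
    simp only [Finset.mem_Icc] at hc
    exact Wgt_nonneg h hc.1 hc.2)).mp hsum
  exact this b (Finset.mem_Icc.mpr ⟨hab, hb⟩)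

lemma gm_mul_qr (h : Hyp n X) {a b : ℕ} (hab : a ≤ b) (hb : b ≤ n) :
    gm X a * qr n X a b = Wgt n X a b := by
  unfold qr
  rcases eq_or_ne (gm X a) 0 with hg | hg
  · rw [if_pos hg, hg, zero_mul, Wgt_eq_zero_of_gm h (by omega) hg hab hb]
  · rw [if_neg hg]
    field_simp

lemma qr_nonneg (h : Hyp n X) {a b : ℕ} (hab : a ≤ b) (hb : b ≤ n) : 0 ≤ qr n X a b := by
  unfold qr
  rcases eq_or_ne (gm X a) 0 with hg | hg
  · rw [if_pos hg]
    split_ifs <;> norm_num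
  · rw [if_neg hg]
    apply div_nonneg (Wgt_nonneg h hab hb)
    exact gm_nonneg h (by omega)

lemma sum_qr (h : Hyp n X) {a : ℕ} (ha : a ≤ n) : ∑ b ∈ Finset.Icc a n, qr n X a b = 1 := by
  rcases eq_or_ne (gm X a) 0 with hg | hg
  · unfold qr
    simp only [if_pos hg]
    rw [Finset.sum_ite_eq' (Finset.Icc a n) n (fun _ => (1:ℝ))]
    rw [if_pos (Finset.mem_Icc.mpr ⟨ha, le_refl n⟩)]
  · have : ∑ b ∈ Finset.Icc a n, gm X a * qr n X a b = gm X a := by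
      rw [Finset.sum_congr rfl (fun b hbm => by
        simp only [Finset.mem_Icc] at hbm
        exact gm_mul_qr h hbm.1 hbm.2)]
      exact sum_Wgt h ha
    rw [← Finset.mul_sum] at this
    have h2 : gm X a * ∑ b ∈ Finset.Icc a n, qr n X a b = gm X a * 1 := by
      rw [mul_one]; exact this
    exact mul_left_cancel₀ hg h2

end LMCP

namespace LMCP

noncomputable def prodQ (n : ℕ) (X : ℕ → ℕ → ℝ) : ℕ → List ℕ → ℝ
  | a, [] => qr n X a n
  | a, s :: t => qr n X a (s-1) * prodQ n X s t

noncomputable def SumN (n : ℕ) (X : ℕ → ℕ → ℝ) (a c u v : ℕ) : ℝ :=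
  ∑ S ∈ (Finset.Icc c n).powerset,
    if S ∩ Finset.Ioc u v = ∅ then prodQ n X a (S.sort (· ≤ ·)) else 0

variable {n : ℕ} {X : ℕ → ℕ → ℝ}

lemma SumN_base {a c u v : ℕ} (hc : n < c) : SumN n X a c u v = qr n X a n := by
  unfold SumN
  rw [Finset.Icc_eq_empty (by omega), Finset.powerset_empty, Finset.sum_singleton]
  rw [if_pos (by simp), Finset.sort_empty]
  rfl

lemma Icc_insert_left {c m : ℕ} (h : c ≤ m) :
    Finset.Icc c m = insert c (Finset.Icc (c+1) m) := by
  ext s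
  simp only [Finset.mem_Icc, Finset.mem_insert]
  omega

lemma SumN_split {a c u v : ℕ} (hc : c ≤ n) :
    SumN n X a c u v =
      (if c ∈ Finset.Ioc u v then 0 else qr n X a (c-1) * SumN n X c (c+1) u v) +
        SumN n X a (c+1) u v := by
  unfold SumN
  rw [Icc_insert_left hc, Finset.sum_powerset_insert (by simp)]
  rw [add_comm]
  congr 1
  have hsort : ∀ S ∈ (Finset.Icc (c+1) n).powerset,
      (insert c S).sort (· ≤ ·) = c :: S.sort (· ≤ ·) := by
    intro S hS
    rw [Finset.mem_powerset] at hS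
    apply Finset.sort_insert
    · intro b hb
      have := hS hb
      simp only [Finset.mem_Icc] at this
      omega
    · intro hc'
      have := hS hc'
      simp only [Finset.mem_Icc] at this
      omega
  by_cases hmem : c ∈ Finset.Ioc u v
  · rw [if_pos hmem]
    apply Finset.sum_eq_zero
    intro S hS
    rw [if_neg]
    intro hempty
    have : c ∈ insert c S ∩ Finset.Ioc u v :=
      Finset.mem_inter.mpr ⟨Finset.mem_insert_self c S, hmem⟩
    rw [hempty] at this
    exact absurd this (Finset.notMem_empty c)
  · rw [if_neg hmem, Finset.mul_sum]
    apply Finset.sum_congr rfl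
    intro S hS
    rw [Finset.insert_inter_of_notMem hmem, hsort S hS]
    by_cases he : S ∩ Finset.Ioc u v = ∅
    · rw [if_pos he, if_pos he]
      rfl
    · rw [if_neg he, if_neg he, mul_zero]

lemma SumN_high (h : Hyp n X) :
    ∀ d a c u v : ℕ, c + d = n + 1 → v < c →
      SumN n X a c u v = ∑ b ∈ Finset.Icc (c-1) n, qr n X a b := by
  intro d
  induction d with
  | zero =>
    intro a c u v hd hv
    have : c = n + 1 := by omega
    subst this
    rw [SumN_base (by omega)]
    simp only [Nat.add_sub_cancel, Finset.Icc_self, Finset.sum_singleton]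
  | succ d ih =>
    intro a c u v hd hv
    have hcn : c ≤ n := by omega
    rw [SumN_split hcn, if_neg (by simp only [Finset.mem_Ioc]; omega)]
    rw [ih a (c+1) u v (by omega) (by omega), ih c (c+1) u v (by omega) (by omega)]
    simp only [Nat.add_sub_cancel]
    rw [show ∑ b ∈ Finset.Icc c n, qr n X c b = 1 from sum_qr h hcn, mul_one]
    rw [Icc_insert_left (show c - 1 ≤ n by omega), Finset.sum_insert (by
      simp only [Finset.mem_Icc]; omega)]
    have : c - 1 + 1 = c := by omega
    rw [this]

lemma SumN_high' (h : Hyp n X) {a c u v : ℕ} (hvc : v < c) (hc : c ≤ n + 1) :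
    SumN n X a c u v = ∑ b ∈ Finset.Icc (c-1) n, qr n X a b :=
  SumN_high h (n + 1 - c) a c u v (by omega) hvc

lemma SumN_mid (h : Hyp n X) :
    ∀ d a c u v : ℕ, u < c → c + d = v + 1 → v ≤ n →
      SumN n X a c u v = ∑ b ∈ Finset.Icc v n, qr n X a b := by
  intro d
  induction d with
  | zero =>
    intro a c u v huc hd hv
    have : c = v + 1 := by omega
    rw [SumN_high' h (by omega) (by omega), this]
    simp only [Nat.add_sub_cancel]
  | succ d ih =>
    intro a c u v huc hd hv
    rw [SumN_split (by omega), if_pos (by simp only [Finset.mem_Ioc]; omega), zero_add]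
    exact ih a (c+1) u v (by omega) (by omega) hv

lemma SumN_low (h : Hyp n X) {u v : ℕ} (huv : u < v) (hv : v ≤ n) :
    ∀ d a c : ℕ, c + d = u + 1 →
      SumN n X a c u v = (∑ b ∈ Finset.Icc v n, qr n X a b) +
        ∑ s ∈ Finset.Icc c u, qr n X a (s-1) * SumN n X s (s+1) u v := by
  intro d
  induction d with
  | zero =>
    intro a c hd
    have hc : c = u + 1 := by omega
    subst hc
    rw [Finset.Icc_eq_empty (show ¬ (u+1:ℕ) ≤ u by omega), Finset.sum_empty, add_zero]
    rw [SumN_split (by omega), if_pos (by simp only [Finset.mem_Ioc]; omega), zero_add]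
    exact SumN_mid h (v - u - 1) a (u+2) u v (by omega) (by omega) hv
  | succ d ih =>
    intro a c hd
    have hcu : c ≤ u := by omega
    rw [SumN_split (by omega), if_neg (by simp only [Finset.mem_Ioc]; omega)]
    rw [ih a (c+1) (by omega)]
    rw [Icc_insert_left hcu, Finset.sum_insert (by simp only [Finset.mem_Icc]; omega)]
    ring

end LMCP

namespace LMCP

variable {n : ℕ} {X : ℕ → ℕ → ℝ}

lemma sum_Wgt_from (h : Hyp n X) {a w : ℕ} (hw : w ≤ n) :
    ∑ b ∈ Finset.Icc w n, Wgt n X a b =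
      Yb n X a w - (if a = 0 then 0 else Yb n X (a-1) w) := by
  have key : ∀ b, Wgt n X a b =
      (fun t => Yb n X a t - if a = 0 then 0 else Yb n X (a-1) t) b -
      (fun t => Yb n X a t - if a = 0 then 0 else Yb n X (a-1) t) (b+1) := by
    intro b
    simp only [Wgt]
    split_ifs <;> ring
  rw [Finset.sum_congr rfl (fun b _ => key b), sum_Icc_telescope _ hw]
  simp only [Yb_out (show n < n + 1 by omega)]
  split_ifs <;> ring

lemma SumN_marginal (h : Hyp n X) {u v : ℕ} (huv : u < v) (hv : v ≤ n) :
    SumN n X 0 1 u v = Yb n X u v := by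
  -- E a = SumN n X a (a+1) u v
  set E : ℕ → ℝ := fun a => SumN n X a (a+1) u v with hE
  have hkey : ∀ a, a ≤ u → gm X a * E a =
      (∑ b ∈ Finset.Icc v n, Wgt n X a b) +
        ∑ s ∈ Finset.Icc (a+1) u, Wgt n X a (s-1) * E s := by
    intro a ha
    have hC := SumN_low h huv hv (u - a) a (a+1) (by omega)
    rw [hE]
    simp only
    rw [hC, mul_add, Finset.mul_sum, Finset.mul_sum]
    congr 1
    · apply Finset.sum_congr rfl
      intro b hb
      simp only [Finset.mem_Icc] at hb
      rw [gm_mul_qr h (by omega) hb.2]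
    · apply Finset.sum_congr rfl
      intro s hs
      simp only [Finset.mem_Icc] at hs
      rw [← mul_assoc, gm_mul_qr h (by omega) (by omega)]
  -- sum the key identity over a ∈ range (u+1)
  have hsum : ∑ a ∈ Finset.range (u+1), gm X a * E a =
      (∑ a ∈ Finset.range (u+1), ∑ b ∈ Finset.Icc v n, Wgt n X a b) +
        ∑ a ∈ Finset.range (u+1), ∑ s ∈ Finset.Icc (a+1) u, Wgt n X a (s-1) * E s := by
    rw [← Finset.sum_add_distrib]
    apply Finset.sum_congr rfl
    intro a ha
    simp only [Finset.mem_range] at ha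
    exact hkey a (by omega)
  -- swap the double sum
  have hswap : ∑ a ∈ Finset.range (u+1), ∑ s ∈ Finset.Icc (a+1) u, Wgt n X a (s-1) * E s =
      ∑ s ∈ Finset.Icc 1 u, (∑ a ∈ Finset.range s, Wgt n X a (s-1)) * E s := by
    rw [Finset.sum_comm' (s := Finset.range (u+1)) (t := fun a => Finset.Icc (a+1) u)
      (t' := Finset.Icc 1 u) (s' := fun s => Finset.range s) (by
        intro a s
        simp only [Finset.mem_range, Finset.mem_Icc]
        omega)]
    apply Finset.sum_congr rfl
    intro s _
    rw [Finset.sum_mul]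
  have hconsv : ∀ s ∈ Finset.Icc 1 u, (∑ a ∈ Finset.range s, Wgt n X a (s-1)) * E s =
      gm X s * E s := by
    intro s hs
    simp only [Finset.mem_Icc] at hs
    rw [sum_Wgt_conserve h hs.1 (by omega)]
  -- split off the a = 0 term
  have hsplit : ∑ a ∈ Finset.range (u+1), gm X a * E a =
      gm X 0 * E 0 + ∑ s ∈ Finset.Icc 1 u, gm X s * E s := by
    rw [show Finset.range (u+1) = insert 0 (Finset.Icc 1 u) by
      ext s; simp only [Finset.mem_range, Finset.mem_insert, Finset.mem_Icc]; omega]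
    rw [Finset.sum_insert (by simp only [Finset.mem_Icc]; omega)]
  have hcancel : gm X 0 * E 0 = ∑ a ∈ Finset.range (u+1), ∑ b ∈ Finset.Icc v n, Wgt n X a b := by
    rw [Finset.sum_congr rfl hconsv] at hswap
    rw [hswap] at hsum
    rw [hsplit] at hsum
    linarith
  have htel : ∑ a ∈ Finset.range (u+1), ∑ b ∈ Finset.Icc v n, Wgt n X a b = Yb n X u v := by
    rw [Finset.sum_congr rfl (fun a _ => sum_Wgt_from h hv)]
    have := sum_range_shift_telescope (fun a => Yb n X a v) (show 1 ≤ u + 1 by omega)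
    simp only [Nat.add_sub_cancel] at this
    exact this
  have hg0 : gm X 0 = 1 := by rw [gm, if_pos rfl]
  have hE0 : E 0 = SumN n X 0 1 u v := rfl
  rw [hg0, one_mul, hE0, htel] at hcancel
  exact hcancel

lemma SumN_total (h : Hyp n X) (u : ℕ) : SumN n X 0 1 u u = 1 := by
  have e : SumN n X 0 1 u u = SumN n X 0 1 0 0 := by
    unfold SumN
    apply Finset.sum_congr rfl
    intro S _
    rw [Finset.Ioc_self, Finset.Ioc_self]
  rw [e, SumN_high' h (by omega) (by omega)]
  simpa using sum_qr h (show 0 ≤ n by omega)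

lemma prodQ_nonneg (h : Hyp n X) :
    ∀ (l : List ℕ) (a : ℕ), a ≤ n → (∀ s ∈ l, a < s ∧ s ≤ n) → l.Pairwise (· < ·) →
      0 ≤ prodQ n X a l := by
  intro l
  induction l with
  | nil =>
    intro a ha _ _
    exact qr_nonneg h ha (le_refl n)
  | cons s t ih =>
    intro a ha hmem hsort
    have hs := hmem s (List.mem_cons_self)
    have h1 : 0 ≤ qr n X a (s-1) := qr_nonneg h (by omega) (by omega)
    have h2 : 0 ≤ prodQ n X s t := by
      apply ih s (by omega)
      · intro r hr
        have := hmem r (List.mem_cons_of_mem s hr)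
        rcases List.pairwise_cons.mp hsort with ⟨hlt, _⟩
        exact ⟨hlt r hr, this.2⟩
      · exact (List.pairwise_cons.mp hsort).2
    exact mul_nonneg h1 h2

end LMCP

namespace LMCP

variable {n : ℕ}

lemma RHS_subset_LMC (hn : 2 ≤ n) :
    RHSset n ⊆ LMC (SimpleGraph.pathGraph (n+1)) (⊤ : SimpleGraph (Fin (n+1))) := by
  intro x hx
  obtain ⟨hd, h1, h2, h3, h4, h5⟩ := hx
  set X : ℕ → ℕ → ℝ := fun u v => x s((u : Fin (n+1)), (v : Fin (n+1))) with hX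
  have hH : Hyp n X := by
    refine ⟨hn, ?_, ?_, h2, h3, h4, h5⟩
    · intro u hu
      apply hd
      rw [Sym2.isDiag_iff_proj_eq]
    · show x s(((0:ℕ) : Fin (n+1)), ((n:ℕ) : Fin (n+1))) ≤ 1
      rw [Nat.cast_zero]
      exact h1
  set t := (Finset.Icc 1 n).powerset with ht
  set w : Finset ℕ → ℝ := fun S => prodQ n X 0 (S.sort (· ≤ ·)) with hw
  have hw0 : ∀ S ∈ t, 0 ≤ w S := by
    intro S hS
    rw [Finset.mem_powerset] at hS
    apply prodQ_nonneg hH _ 0 (by omega)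
    · intro s hs
      rw [Finset.mem_sort] at hs
      have := hS hs
      simp only [Finset.mem_Icc] at this
      omega
    · exact (Finset.sortedLT_sort S).pairwise
  have hw1 : ∑ S ∈ t, w S = 1 := by
    have : ∑ S ∈ t, w S = SumN n X 0 1 0 0 := by
      unfold SumN
      apply Finset.sum_congr rfl
      intro S _
      rw [Finset.Ioc_self, Finset.inter_empty, if_pos rfl]
    rw [this, SumN_total hH]
  have hz : ∀ S ∈ t, vecS n S ∈
      liftedVectors (SimpleGraph.pathGraph (n+1)) (⊤ : SimpleGraph (Fin (n+1))) := by
    intro S _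
    exact ⟨partS n S, isDecomposition_partS S, (multicutVec_partS S).symm⟩
  have hmem := Finset.centerMass_mem_convexHull t hw0 (by rw [hw1]; norm_num) hz
  rw [Finset.centerMass, hw1, inv_one, one_smul] at hmem
  have hxeq : x = ∑ S ∈ t, w S • vecS n S := by
    have claim : ∀ α β : Fin (n+1), α.val ≤ β.val →
        x s(α, β) = (∑ S ∈ t, w S • vecS n S) s(α, β) := by
      intro α β hab
      rw [Finset.sum_apply]
      have hvs : ∀ S, (w S • vecS n S) s(α, β) =
          w S - (if S ∩ Finset.Ioc α.val β.val = ∅ then w S else 0) := by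
        intro S
        rw [Pi.smul_apply, vecS_apply, smul_eq_mul]
        by_cases hrk : rk S α.val = rk S β.val
        · rw [if_pos hrk, if_pos ((rk_eq_iff S hab).mp hrk), mul_zero]
          ring
        · rw [if_neg hrk, if_neg (fun hh => hrk ((rk_eq_iff S hab).mpr hh)), mul_one]
          ring
      rw [Finset.sum_congr rfl (fun S _ => hvs S), Finset.sum_sub_distrib, hw1]
      have hsn : ∑ S ∈ t, (if S ∩ Finset.Ioc α.val β.val = ∅ then w S else 0) =
          SumN n X 0 1 α.val β.val := rfl
      rw [hsn]
      rcases Nat.lt_or_ge α.val β.val with hlt | hge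
      · rw [SumN_marginal hH hlt (by omega), Yb_of_le hH (by omega) (by omega)]
        have : X α.val β.val = x s(α, β) := by
          rw [hX]
          simp only
          rw [Fin.cast_val_eq_self, Fin.cast_val_eq_self]
        rw [← this]
        ring
      · have hab' : α = β := Fin.ext (by omega)
        subst hab'
        rw [SumN_total hH]
        rw [hd s(α, α) (by rw [Sym2.isDiag_iff_proj_eq])]
        ring
    funext e
    induction e with
    | _ α β =>
      rcases le_or_gt α.val β.val with hle | hlt
      · exact claim α β hle
      · rw [Sym2.eq_swap]
        exact claim β α (by omega)
  rw [LMC]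
  rw [hxeq]
  exact hmem

end LMCP


/-- complete description of the lifted multicut polytope of a path of
length `n ≥ 2` (nodes `0, …, n`), lifted to the complete graph. -/
theorem lmc_path_complete_description (n : ℕ) (hn : 2 ≤ n) :
    LMC (SimpleGraph.pathGraph (n + 1)) ⊤ =
      {x : Sym2 (Fin (n + 1)) → ℝ |
        (∀ e : Sym2 (Fin (n + 1)), e.IsDiag → x e = 0) ∧
        x s((0 : Fin (n + 1)), (n : Fin (n + 1))) ≤ 1 ∧
        (∀ i : ℕ, 1 ≤ i → i ≤ n - 1 →
          x s((i : Fin (n + 1)), (n : Fin (n + 1)))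
            ≤ x s(((i - 1 : ℕ) : Fin (n + 1)), (n : Fin (n + 1)))) ∧
        (∀ i : ℕ, 1 ≤ i → i ≤ n - 1 →
          x s((0 : Fin (n + 1)), (i : Fin (n + 1)))
            ≤ x s((0 : Fin (n + 1)), ((i + 1 : ℕ) : Fin (n + 1)))) ∧
        (∀ i : ℕ, 1 ≤ i → i ≤ n - 1 →
          x s(((i - 1 : ℕ) : Fin (n + 1)), ((i + 1 : ℕ) : Fin (n + 1)))
            ≤ x s(((i - 1 : ℕ) : Fin (n + 1)), (i : Fin (n + 1)))
              + x s((i : Fin (n + 1)), ((i + 1 : ℕ) : Fin (n + 1)))) ∧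
        (∀ j k : ℕ, j + 2 < k → k ≤ n →
          x s((j : Fin (n + 1)), (k : Fin (n + 1)))
              + x s(((j + 1 : ℕ) : Fin (n + 1)), ((k - 1 : ℕ) : Fin (n + 1)))
            ≤ x s(((j + 1 : ℕ) : Fin (n + 1)), (k : Fin (n + 1)))
              + x s((j : Fin (n + 1)), ((k - 1 : ℕ) : Fin (n + 1))))} := by
  exact Set.Subset.antisymm (LMCP.LMC_subset_RHS hn) (LMCP.RHS_subset_LMC hn)
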